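/- For every prime p ≥ 5 and every odd integer n with 3 ≤ n ≤ p-2, Σ_{k=1}^{(p-1)/2} 1/k^n ≡ -(2(2^{n-1}-1)/n) B_{p-n} (mod p), as a congruence of p-integral rationals. -/

import Mathlib

set_option maxHeartbeats 1000000
open Finset PowerSeries
lemma myRescaleX : PowerSeries.rescale (2:ℚ) PowerSeries.X = PowerSeries.C (R := ℚ) 2 * PowerSeries.X := by
  ext n
  simp only [PowerSeries.coeff_rescale, PowerSeries.coeff_X, PowerSeries.coeff_C_mul]
  rcases eq_or_ne n 1 with h | h
  · simp [h]
  · simp [h]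

lemma myMain : PowerSeries.rescale (2:ℚ) (bernoulliPowerSeries ℚ) * (PowerSeries.exp ℚ + 1)
    = PowerSeries.C (R := ℚ) 2 * bernoulliPowerSeries ℚ := by
  have hE1 : (PowerSeries.exp ℚ - 1) ≠ 0 := by
    intro h
    have := congrArg (PowerSeries.coeff (R := ℚ) 1) h
    simp [PowerSeries.coeff_exp] at this
  apply mul_right_cancel₀ hE1
  have h2E : PowerSeries.rescale (2:ℚ) (PowerSeries.exp ℚ)
      = PowerSeries.exp ℚ * PowerSeries.exp ℚ := by
    have h := PowerSeries.exp_mul_exp_eq_exp_add (1:ℚ) 1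
    rw [PowerSeries.rescale_one] at h
    norm_num at h
    exact h.symm ▸ rfl
  calc PowerSeries.rescale (2:ℚ) (bernoulliPowerSeries ℚ) * (PowerSeries.exp ℚ + 1) * (PowerSeries.exp ℚ - 1)
      = PowerSeries.rescale (2:ℚ) (bernoulliPowerSeries ℚ) * (PowerSeries.rescale (2:ℚ) (PowerSeries.exp ℚ) - PowerSeries.rescale (2:ℚ) 1) := by
        rw [h2E, map_one]; ring
    _ = PowerSeries.rescale (2:ℚ) (bernoulliPowerSeries ℚ * (PowerSeries.exp ℚ - 1)) := by
        rw [map_mul, map_sub]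
    _ = PowerSeries.rescale (2:ℚ) PowerSeries.X := by rw [bernoulliPowerSeries_mul_exp_sub_one]
    _ = PowerSeries.C (R := ℚ) 2 * PowerSeries.X := myRescaleX
    _ = PowerSeries.C (R := ℚ) 2 * (bernoulliPowerSeries ℚ * (PowerSeries.exp ℚ - 1)) := by
        rw [bernoulliPowerSeries_mul_exp_sub_one]
    _ = PowerSeries.C (R := ℚ) 2 * bernoulliPowerSeries ℚ * (PowerSeries.exp ℚ - 1) := by ring

lemma myBern2 (r : ℕ) :
    ∑ i ∈ range (r+1), ((r.choose i : ℕ) : ℚ) * bernoulli i * 2^i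
      = (2 - 2^r) * bernoulli r := by
  have hco := congrArg (PowerSeries.coeff (R := ℚ) r) myMain
  rw [PowerSeries.coeff_mul, Finset.Nat.sum_antidiagonal_eq_sum_range_succ_mk] at hco
  simp only [bernoulliPowerSeries, PowerSeries.coeff_rescale, PowerSeries.coeff_mk, map_add,
    PowerSeries.coeff_exp, PowerSeries.coeff_one, PowerSeries.coeff_C_mul,
    Algebra.algebraMap_self, RingHom.id_apply] at hco
  rw [Finset.sum_range_succ] at hco
  have hco2 : (∑ k ∈ range r, (2:ℚ)^k * (bernoulli k / k.factorial) * (1/(r-k).factorial))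
      + 2^r * (bernoulli r / r.factorial) * (1 + 1) = 2 * (bernoulli r / r.factorial) := by
    rw [← hco]
    congr 1
    · apply Finset.sum_congr rfl
      intro k hk
      have hk' : r - k ≠ 0 := by have := Finset.mem_range.1 hk; omega
      rw [if_neg hk']
      ring
    · rw [Nat.sub_self, if_pos rfl, Nat.factorial_zero]
      push_cast
      ring
  have hfac : ∀ m : ℕ, ((m.factorial : ℚ)) ≠ 0 := fun m => by
    exact_mod_cast m.factorial_ne_zero
  calc ∑ i ∈ range (r+1), ((r.choose i : ℕ) : ℚ) * bernoulli i * 2^i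
      = (r.factorial : ℚ) * ((∑ k ∈ range r, (2:ℚ)^k * (bernoulli k / k.factorial) * (1/(r-k).factorial))
          + 2^r * (bernoulli r / r.factorial)) := by
        rw [Finset.sum_range_succ, mul_add, Finset.mul_sum]
        congr 1
        · apply Finset.sum_congr rfl
          intro k hk
          have hkr : k ≤ r := le_of_lt (Finset.mem_range.1 hk)
          rw [Nat.cast_choose ℚ hkr]
          field_simp
        · rw [Nat.choose_self]
          field_simp
          ring
    _ = (r.factorial : ℚ) * (2 * (bernoulli r / r.factorial) - 2^r * (bernoulli r / r.factorial)) := by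
        congr 1
        linarith [hco2]
    _ = (2 - 2^r) * bernoulli r := by
        field_simp

section
variable {p : ℕ} [hp : Fact p.Prime]



lemma myNormNat (k : ℕ) : ‖(k : ℚ_[p])‖ ≤ 1 := by
  simpa using Padic.norm_int_le_one (p := p) k

lemma myNormUnit {t : ℕ} (h0 : 0 < t) (hlt : t < p) : ‖(t : ℚ_[p])‖ = 1 := by
  refine le_antisymm (myNormNat t) ?_
  by_contra h
  push_neg at h
  have h2 : ‖((t : ℤ) : ℚ_[p])‖ < 1 := by push_cast; linarith
  rw [Padic.norm_intCast_lt_one_iff] at h2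
  have := Int.le_of_dvd (by exact_mod_cast h0) h2
  omega

lemma myNormDvd {z : ℤ} (h : (p : ℤ) ∣ z) : ‖((z : ℚ_[p]))‖ ≤ (p : ℝ) ^ (-(1:ℤ)) := by
  have := (Padic.norm_int_le_pow_iff_dvd (p := p) z 1).2 (by simpa using h)
  simpa using this

lemma myFermat {k : ℕ} (h0 : 0 < k) (hlt : k < p) :
    ‖((k : ℚ_[p]) ^ (p - 1) - 1)‖ ≤ (p : ℝ) ^ (-(1:ℤ)) := by
  have hcast : ((k ^ (p - 1) - 1 : ℤ) : ℚ_[p]) = (k : ℚ_[p]) ^ (p - 1) - 1 := by push_cast; ring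
  rw [← hcast]
  apply myNormDvd
  rw [← ZMod.intCast_zmod_eq_zero_iff_dvd]
  push_cast
  rw [sub_eq_zero]
  apply ZMod.pow_card_sub_one_eq_one
  simpa [Ne, ZMod.natCast_eq_zero_iff] using Nat.not_dvd_of_pos_of_lt h0 hlt

lemma myBij (i : ℕ) : ∑ k ∈ range p, (k : ZMod p) ^ i = ∑ x : ZMod p, x ^ i := by
  refine Finset.sum_bij' (fun k _ => (k : ZMod p)) (fun x _ => x.val) ?_ ?_ ?_ ?_ ?_
  · intro a _; exact mem_univ _
  · intro x _; exact mem_range.2 (ZMod.val_lt x)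
  · intro a ha; exact ZMod.val_cast_of_lt (mem_range.1 ha)
  · intro x _; simp [ZMod.natCast_val, ZMod.cast_id]
  · intro a _; rfl

lemma mySumPow {i : ℕ} (hi : i < p - 1) : (p : ℤ) ∣ (∑ k ∈ range p, (k : ℤ) ^ i) := by
  rw [← ZMod.intCast_zmod_eq_zero_iff_dvd]
  push_cast
  rw [myBij]
  exact FiniteField.sum_pow_lt_card_sub_one (K := ZMod p) i (by simpa [ZMod.card] using hi)

lemma myNormSub (a b : ℚ_[p]) {c : ℝ} (ha : ‖a‖ ≤ c) (hb : ‖b‖ ≤ c) : ‖a - b‖ ≤ c := by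
  rw [sub_eq_add_neg]
  exact le_trans (Padic.nonarchimedean _ _) (max_le ha (by rwa [norm_neg]))

lemma myPowDiff (x y : ℚ_[p]) (hx : ‖x‖ ≤ 1) (hy : ‖y‖ ≤ 1) (e : ℕ) :
    ‖x ^ e - y ^ e‖ ≤ ‖x - y‖ := by
  rw [← geom_sum₂_mul x y e, norm_mul]
  have h1 : ‖∑ i ∈ range e, x ^ i * y ^ (e - 1 - i)‖ ≤ 1 := by
    refine IsUltrametricDist.norm_sum_le_of_forall_le_of_nonneg zero_le_one ?_
    intro i _
    rw [norm_mul, norm_pow, norm_pow]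
    calc ‖x‖ ^ i * ‖y‖ ^ (e - 1 - i) ≤ 1 * 1 :=
          mul_le_mul (pow_le_one₀ (norm_nonneg x) hx) (pow_le_one₀ (norm_nonneg y) hy)
            (by positivity) zero_le_one
      _ = 1 := one_mul 1
  calc ‖∑ i ∈ range e, x ^ i * y ^ (e - 1 - i)‖ * ‖x - y‖ ≤ 1 * ‖x - y‖ := by
        exact mul_le_mul_of_nonneg_right h1 (norm_nonneg _)
    _ = ‖x - y‖ := one_mul _

lemma myBernInt (i : ℕ) (hip : i ≤ p - 2) : ‖((bernoulli i : ℚ) : ℚ_[p])‖ ≤ 1 := by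
  induction i using Nat.strong_induction_on with
  | _ i IH =>
  rcases Nat.eq_zero_or_pos i with h0 | h0
  · subst h0; simp
  have hp2 := hp.out.two_le
  have hi1 : i + 1 < p := by omega
  have hQ : (i + 1 : ℚ) ≠ 0 := by positivity
  have key := sum_range_pow p i
  rw [Finset.sum_range_succ] at key
  have hlast : bernoulli i * (((i+1).choose i : ℕ) : ℚ) * (p:ℚ) ^ (i+1-i) / (i+1)
      = bernoulli i * p := by
    rw [Nat.choose_succ_self_right]
    have h1 : i + 1 - i = 1 := by omega
    rw [h1]; field_simp; push_cast; ring
  rw [hlast] at key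
  have keq : ((bernoulli i) * (p:ℚ) : ℚ) = (∑ k ∈ range p, (k:ℚ)^i)
      - ∑ j ∈ range i, bernoulli j * (((i+1).choose j : ℕ) : ℚ) * (p:ℚ)^(i+1-j)/(i+1) := by
    linarith [key]
  have h1 : ‖(((∑ k ∈ range p, (k:ℚ)^i) : ℚ) : ℚ_[p])‖ ≤ (p:ℝ)^(-(1:ℤ)) := by
    have hd := mySumPow (p := p) (i := i) (by omega)
    have hc : (((∑ k ∈ range p, (k:ℤ)^i : ℤ)) : ℚ_[p])
        = (((∑ k ∈ range p, (k:ℚ)^i) : ℚ) : ℚ_[p]) := by push_cast; rfl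
    rw [← hc]; exact myNormDvd hd
  have h2 : ‖(((∑ j ∈ range i, bernoulli j * (((i+1).choose j : ℕ) : ℚ) * (p:ℚ)^(i+1-j)/(i+1)) : ℚ) : ℚ_[p])‖
      ≤ (p:ℝ)^(-(1:ℤ)) := by
    rw [Rat.cast_sum]
    refine IsUltrametricDist.norm_sum_le_of_forall_le_of_nonneg (by positivity) ?_
    intro j hj
    have hjlt := Finset.mem_range.1 hj
    have hb : ‖((bernoulli j : ℚ) : ℚ_[p])‖ ≤ 1 := IH j hjlt (by omega)
    have hch : ‖(((((i+1).choose j : ℕ)) : ℚ) : ℚ_[p])‖ ≤ 1 := by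
      rw [Rat.cast_natCast]; exact myNormNat _
    have hiu : ‖(((i + 1 : ℚ)) : ℚ_[p])‖ = 1 := by
      rw [show ((i + 1 : ℚ)) = ((i + 1 : ℕ) : ℚ) by push_cast; ring, Rat.cast_natCast]
      exact myNormUnit (by omega) hi1
    have hpp : ‖(((p:ℚ)^(i+1-j) : ℚ) : ℚ_[p])‖ ≤ (p:ℝ)^(-(1:ℤ)) := by
      rw [Rat.cast_pow, Rat.cast_natCast, norm_pow, Padic.norm_p]
      have he : 1 ≤ i + 1 - j := by omega
      calc ((p:ℝ)⁻¹) ^ (i+1-j) ≤ ((p:ℝ)⁻¹) ^ 1 := by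
            apply pow_le_pow_of_le_one (by positivity) ?_ he
            rw [inv_le_one_iff₀]; right; exact_mod_cast Nat.one_le_of_lt hp2
        _ = (p:ℝ)^(-(1:ℤ)) := by rw [pow_one, zpow_neg_one]
    rw [Rat.cast_div, Rat.cast_mul, Rat.cast_mul, norm_div, norm_mul, norm_mul, hiu, div_one]
    calc ‖((bernoulli j : ℚ) : ℚ_[p])‖ * ‖(((((i+1).choose j : ℕ):ℚ)) : ℚ_[p])‖ * ‖(((p:ℚ)^(i+1-j) : ℚ) : ℚ_[p])‖
        ≤ 1 * 1 * ((p:ℝ)^(-(1:ℤ))) := by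
          apply mul_le_mul (mul_le_mul hb hch (norm_nonneg _) zero_le_one) hpp (norm_nonneg _) (by norm_num)
      _ = (p:ℝ)^(-(1:ℤ)) := by ring
  have hnorm : ‖(((bernoulli i) * (p:ℚ) : ℚ) : ℚ_[p])‖ ≤ (p:ℝ)^(-(1:ℤ)) := by
    rw [keq, Rat.cast_sub]
    exact myNormSub _ _ h1 h2
  have hmul : ‖(((bernoulli i) * (p:ℚ) : ℚ) : ℚ_[p])‖
      = ‖((bernoulli i : ℚ) : ℚ_[p])‖ * (p:ℝ)⁻¹ := by
    rw [Rat.cast_mul, norm_mul, Rat.cast_natCast, Padic.norm_p]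
  rw [hmul, zpow_neg_one] at hnorm
  have hppos : (0:ℝ) < (p:ℝ)⁻¹ := by
    have : (0:ℝ) < (p:ℝ) := by exact_mod_cast hp.out.pos
    positivity
  calc ‖((bernoulli i : ℚ) : ℚ_[p])‖ = ‖((bernoulli i : ℚ) : ℚ_[p])‖ * (p:ℝ)⁻¹ / (p:ℝ)⁻¹ := by
        field_simp
    _ ≤ (p:ℝ)⁻¹ / (p:ℝ)⁻¹ := by gcongr
    _ = 1 := by field_simp

end
theorem half_power_sum_odd (p : ℕ) [Fact p.Prime] (h5 : 5 ≤ p) (n : ℕ)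
    (hno : Odd n) (h3 : 3 ≤ n) (hnp : n ≤ p - 2) :
    ‖(((∑ k ∈ Finset.Icc 1 ((p - 1) / 2), (1 : ℚ) / (k : ℚ) ^ n)
        - (-(2 * (2 ^ (n - 1) - 1) / (n : ℚ)) * bernoulli (p - n)) : ℚ) : ℚ_[p])‖
      ≤ (p : ℝ) ^ (-(1 : ℤ)) := by
  have hp : Fact p.Prime := inferInstance
  set H := (p - 1) / 2 with hHdef
  set m := p - 1 - n with hmdef
  have hpodd : p % 2 = 1 := Nat.odd_iff.1 (hp.out.odd_of_ne_two (by omega))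
  have h2M : 2 * (H + 1) = p + 1 := by omega
  have hmn : n + m = p - 1 := by omega
  have hm1 : 1 ≤ m := by omega
  have hrm : p - n = m + 1 := by omega
  have hHp : H < p := by omega
  have hnp' : n < p := by omega
  have hrlt : m + 1 < p := by omega
  set x : ℚ := ∑ k ∈ Finset.Icc 1 H, (1 : ℚ) / (k : ℚ) ^ n with hx
  set y : ℚ := -(2 * (2 ^ (n - 1) - 1) / (n : ℚ)) * bernoulli (p - n) with hy
  set a : ℚ := ∑ k ∈ Finset.Icc 1 H, (k : ℚ) ^ m with ha
  set M := H + 1 with hMdef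
  set b : ℚ := ∑ i ∈ range (m + 1),
      bernoulli i * ((m + 1).choose i) * (M : ℚ) ^ (m + 1 - i) / (m + 1) with hb
  set c : ℚ := ∑ i ∈ range (m + 1),
      bernoulli i * ((m + 1).choose i) * ((2 : ℚ)⁻¹) ^ (m + 1 - i) / (m + 1) with hc
  have hab : a = b := by
    have h1 : a = ∑ k ∈ range M, (k : ℚ) ^ m := by
      rw [ha, Finset.sum_range_succ' (fun k => (k : ℚ) ^ m) H]
      rw [← Finset.Ico_add_one_right_eq_Icc, Finset.sum_Ico_eq_sum_range]
      simp only [Nat.add_sub_cancel]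
      rw [show ((0:ℕ):ℚ) = 0 by norm_cast, zero_pow (by omega), add_zero]
      apply Finset.sum_congr rfl
      intro i _
      rw [Nat.add_comm 1 i]
    rw [h1, hb, sum_range_pow]
  have stepA : ‖((x - a : ℚ) : ℚ_[p])‖ ≤ (p : ℝ) ^ (-(1:ℤ)) := by
    rw [hx, ha, ← Finset.sum_sub_distrib, Rat.cast_sum]
    refine IsUltrametricDist.norm_sum_le_of_forall_le_of_nonneg (by positivity) ?_
    intro k hk
    obtain ⟨hk1, hk2⟩ := Finset.mem_Icc.1 hk
    have hkp : k < p := by omega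
    have hK : ‖(k : ℚ_[p])‖ = 1 := myNormUnit (by omega) hkp
    have hK0 : (k : ℚ_[p]) ≠ 0 := by
      intro h0; rw [h0, norm_zero] at hK; norm_num at hK
    have hterm : (((1 : ℚ) / (k : ℚ) ^ n - (k : ℚ) ^ m : ℚ) : ℚ_[p])
        = (1 - (k : ℚ_[p]) ^ (p - 1)) / (k : ℚ_[p]) ^ n := by
      push_cast
      rw [eq_div_iff (pow_ne_zero n hK0)]
      rw [sub_mul, one_div, inv_mul_cancel₀ (pow_ne_zero n hK0), ← pow_add,
        Nat.add_comm m n, hmn]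
    rw [hterm, norm_div, norm_pow, hK, one_pow, div_one, norm_sub_rev]
    exact myFermat (by omega) hkp

  have hMt : ‖(M : ℚ_[p]) - (2 : ℚ_[p])⁻¹‖ ≤ (p : ℝ) ^ (-(1:ℤ)) := by
    have h2ne : (2 : ℚ_[p]) ≠ 0 := by
      have h2u : ‖(2 : ℚ_[p])‖ = 1 := by
        have := myNormUnit (p := p) (t := 2) (by omega) (by omega)
        push_cast at this; exact this
      intro h0; rw [h0, norm_zero] at h2u; norm_num at h2u
    have heq : (M : ℚ_[p]) - (2 : ℚ_[p])⁻¹ = (p : ℚ_[p]) * (2 : ℚ_[p])⁻¹ := by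
      have h2Mc : ((2 * M : ℕ) : ℚ_[p]) = ((p + 1 : ℕ) : ℚ_[p]) := by rw [h2M]
      have hMQ : (M : ℚ_[p]) = (H : ℚ_[p]) + 1 := by rw [hMdef]; push_cast; ring
      push_cast at h2Mc
      rw [hMQ]
      field_simp
      linear_combination h2Mc - 2 * hMQ
    rw [heq, norm_mul, norm_inv]
    have h2u : ‖(2 : ℚ_[p])‖ = 1 := by
      have := myNormUnit (p := p) (t := 2) (by omega) (by omega)
      push_cast at this; exact this
    rw [h2u, inv_one, mul_one, Padic.norm_p, zpow_neg_one]
  have h2u : ‖(2 : ℚ_[p])‖ = 1 := by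
    have := myNormUnit (p := p) (t := 2) (by omega) (by omega)
    push_cast at this; exact this
  have h2inv : ‖(2 : ℚ_[p])⁻¹‖ = 1 := by rw [norm_inv, h2u, inv_one]
  have hm1u : ‖((m : ℚ_[p]) + 1)‖ = 1 := by
    have := myNormUnit (p := p) (t := m + 1) (by omega) hrlt
    push_cast at this; exact this
  have stepC : ‖((b - c : ℚ) : ℚ_[p])‖ ≤ (p : ℝ) ^ (-(1:ℤ)) := by
    rw [hb, hc, ← Finset.sum_sub_distrib, Rat.cast_sum]
    refine IsUltrametricDist.norm_sum_le_of_forall_le_of_nonneg (by positivity) ?_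
    intro i hi
    have him := Finset.mem_range.1 hi
    have hterm : ((bernoulli i * ((m + 1).choose i) * (M : ℚ) ^ (m + 1 - i) / (m + 1)
        - bernoulli i * ((m + 1).choose i) * ((2 : ℚ)⁻¹) ^ (m + 1 - i) / (m + 1) : ℚ) : ℚ_[p])
        = ((bernoulli i : ℚ) : ℚ_[p]) * (((m + 1).choose i : ℕ) : ℚ_[p])
          * ((M : ℚ_[p]) ^ (m + 1 - i) - ((2 : ℚ_[p])⁻¹) ^ (m + 1 - i)) / ((m : ℚ_[p]) + 1) := by
      push_cast
      ring
    rw [hterm, norm_div, norm_mul, norm_mul, hm1u, div_one]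
    have hbern : ‖((bernoulli i : ℚ) : ℚ_[p])‖ ≤ 1 := myBernInt i (by omega)
    have hch : ‖(((m + 1).choose i : ℕ) : ℚ_[p])‖ ≤ 1 := myNormNat _
    have hpow : ‖(M : ℚ_[p]) ^ (m + 1 - i) - ((2 : ℚ_[p])⁻¹) ^ (m + 1 - i)‖
        ≤ (p : ℝ) ^ (-(1:ℤ)) := by
      refine le_trans (myPowDiff _ _ (myNormNat M) (le_of_eq h2inv) _) hMt
    calc ‖((bernoulli i : ℚ) : ℚ_[p])‖ * ‖(((m + 1).choose i : ℕ) : ℚ_[p])‖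
          * ‖(M : ℚ_[p]) ^ (m + 1 - i) - ((2 : ℚ_[p])⁻¹) ^ (m + 1 - i)‖
        ≤ 1 * 1 * ((p : ℝ) ^ (-(1:ℤ))) := by
          exact mul_le_mul (mul_le_mul hbern hch (norm_nonneg _) zero_le_one) hpow
            (norm_nonneg _) (by norm_num)
      _ = (p : ℝ) ^ (-(1:ℤ)) := by ring
  have hn0 : (n : ℚ) ≠ 0 := by positivity
  have h2n : (2:ℚ)^n = 2 * 2^(n-1) := by
    conv_lhs => rw [show n = (n-1)+1 by omega]
    rw [pow_succ]; ring
  have hmq : (m:ℚ) + 1 = (p:ℚ) - (n:ℚ) := by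
    have h1 : ((p - n : ℕ) : ℚ) = (p:ℚ) - (n:ℚ) := by
      rw [Nat.cast_sub (by omega)]
    rw [← h1, hrm]; push_cast; ring
  have hpn0 : (p:ℚ) - (n:ℚ) ≠ 0 := by
    rw [← hmq]; positivity
  have h2t : (2:ℚ)^n * ((2:ℚ)⁻¹)^(p-1) = 2 * ((2:ℚ)⁻¹)^(m+1) := by
    rw [show p - 1 = (m+1)+(n-1) by omega, pow_add]
    have hx2 : (2:ℚ)^n * ((2:ℚ)⁻¹)^(n-1) = 2 := by
      rw [h2n, inv_pow]; field_simp
    linear_combination ((2:ℚ)⁻¹)^(m+1) * hx2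
  have hcclosed : c = (2 * ((2:ℚ)⁻¹)^(m+1) - 2) * bernoulli (m+1) / ((m:ℚ)+1) := by
    have hsum2 := myBern2 (m+1)
    rw [Finset.sum_range_succ, Nat.choose_self] at hsum2
    have htr : ∀ i ∈ range (m+1),
        bernoulli i * (((m + 1).choose i : ℕ) : ℚ) * ((2 : ℚ)⁻¹) ^ (m + 1 - i) / ((m:ℚ) + 1)
        = (((2:ℚ)⁻¹)^(m+1) / ((m:ℚ)+1)) * ((((m+1).choose i : ℕ) : ℚ) * bernoulli i * 2^i) := by
      intro i hi
      have hile := Finset.mem_range.1 hi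
      have hti : ((2:ℚ)⁻¹)^(m+1-i) = ((2:ℚ)⁻¹)^(m+1) * 2^i := by
        have h1 : (2:ℚ)^(m+1-i) * 2^i = 2^(m+1) := by
          rw [← pow_add, show m+1-i+i = m+1 by omega]
        rw [inv_pow, inv_pow, ← h1, mul_inv, mul_assoc, inv_mul_cancel₀ (by positivity), mul_one]
      rw [hti]; ring
    rw [hc, Finset.sum_congr rfl htr, ← Finset.mul_sum]
    have hs : ∑ i ∈ range (m+1), (((m+1).choose i : ℕ) : ℚ) * bernoulli i * 2^i
        = (2 - 2^(m+1)) * bernoulli (m+1) - bernoulli (m+1) * 2^(m+1) := by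
      push_cast at hsum2 ⊢
      linarith [hsum2]
    rw [hs]
    simp only [inv_pow]
    field_simp
    ring
  have hkey : (c - y : ℚ) = bernoulli (m+1)
      * ((n:ℚ) * 2^n * (((2:ℚ)⁻¹)^(p-1) - 1) + (p:ℚ) * (2^n - 2))
      / (((p:ℚ) - (n:ℚ)) * (n:ℚ)) := by
    have hy2 : 2*((2:ℚ)^(n-1)-1) = 2^n - 2 := by rw [h2n]; ring
    rw [hcclosed, hy, hrm, hmq, hy2, ← h2t]
    field_simp
    ring
  have hnu : ‖(n : ℚ_[p])‖ = 1 := myNormUnit (by omega) hnp'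
  have h2ne : (2 : ℚ_[p]) ≠ 0 := by
    intro h0; rw [h0, norm_zero] at h2u; norm_num at h2u
  have stepE : ‖((c - y : ℚ) : ℚ_[p])‖ ≤ (p : ℝ) ^ (-(1:ℤ)) := by
    rw [hkey]
    have hcast : ((bernoulli (m+1)
        * ((n:ℚ) * 2^n * (((2:ℚ)⁻¹)^(p-1) - 1) + (p:ℚ) * (2^n - 2))
        / (((p:ℚ) - (n:ℚ)) * (n:ℚ)) : ℚ) : ℚ_[p])
        = ((bernoulli (m+1) : ℚ) : ℚ_[p])
          * ((n:ℚ_[p]) * 2^n * (((2:ℚ_[p])⁻¹)^(p-1) - 1) + (p:ℚ_[p]) * (2^n - 2))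
          / ((((m:ℚ_[p])+1)) * (n:ℚ_[p])) := by
      have hmqc : ((((p:ℚ) - (n:ℚ)) : ℚ) : ℚ_[p]) = ((m:ℚ_[p])+1) := by
        rw [← hmq]; push_cast; ring
      rw [Rat.cast_div, Rat.cast_mul, Rat.cast_mul, hmqc]
      push_cast
      ring
    rw [hcast, norm_div, norm_mul, norm_mul, hm1u, hnu, one_mul, div_one]
    have hbern : ‖((bernoulli (m+1) : ℚ) : ℚ_[p])‖ ≤ 1 := myBernInt (m+1) (by omega)
    have hfer2 : ‖((2:ℚ_[p])⁻¹^(p-1) - 1)‖ ≤ (p:ℝ)^(-(1:ℤ)) := by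
      have h2t1 : (2:ℚ_[p])^(p-1) * ((2:ℚ_[p])⁻¹)^(p-1) = 1 := by
        rw [← mul_pow, mul_inv_cancel₀ h2ne, one_pow]
      have heq2 : ((2:ℚ_[p])⁻¹)^(p-1) - 1 = -(((2:ℚ_[p])^(p-1) - 1) * ((2:ℚ_[p])⁻¹)^(p-1)) := by
        linear_combination h2t1
      rw [heq2, norm_neg, norm_mul, norm_pow, norm_inv, h2u, inv_one, one_pow, mul_one]
      have hf := myFermat (p := p) (k := 2) (by omega) (by omega)
      have hc2 : ((2:ℕ):ℚ_[p]) = (2:ℚ_[p]) := by push_cast; rfl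
      rw [hc2] at hf
      exact hf
    have hN : ‖(n:ℚ_[p]) * 2^n * (((2:ℚ_[p])⁻¹)^(p-1) - 1) + (p:ℚ_[p]) * (2^n - 2)‖
        ≤ (p:ℝ)^(-(1:ℤ)) := by
      refine le_trans (Padic.nonarchimedean _ _) (max_le ?_ ?_)
      · rw [norm_mul, norm_mul, hnu, norm_pow, h2u, one_pow, one_mul, one_mul]
        exact hfer2
      · rw [norm_mul, Padic.norm_p]
        have h22 : ‖(2:ℚ_[p])^n - 2‖ ≤ 1 := by
          have : ((2^n - 2 : ℤ) : ℚ_[p]) = (2:ℚ_[p])^n - 2 := by push_cast; ring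
          rw [← this]
          exact Padic.norm_int_le_one _
        calc (p:ℝ)⁻¹ * ‖(2:ℚ_[p])^n - 2‖ ≤ (p:ℝ)⁻¹ * 1 := by
              apply mul_le_mul_of_nonneg_left h22 (by positivity)
          _ = (p:ℝ)^(-(1:ℤ)) := by rw [mul_one, zpow_neg_one]
    calc ‖((bernoulli (m+1) : ℚ) : ℚ_[p])‖
          * ‖(n:ℚ_[p]) * 2^n * (((2:ℚ_[p])⁻¹)^(p-1) - 1) + (p:ℚ_[p]) * (2^n - 2)‖
        ≤ 1 * ((p:ℝ)^(-(1:ℤ))) := mul_le_mul hbern hN (norm_nonneg _) zero_le_one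
      _ = (p:ℝ)^(-(1:ℤ)) := one_mul _
  have hsplit : ((x - y : ℚ) : ℚ_[p])
      = ((x - a : ℚ) : ℚ_[p]) + (((b - c : ℚ) : ℚ_[p]) + ((c - y : ℚ) : ℚ_[p])) := by
    have : (x - y : ℚ) = (x - a) + ((b - c) + (c - y)) := by
      rw [hab]; ring
    rw [this]; push_cast; ring
  rw [hsplit]
  exact le_trans (Padic.nonarchimedean _ _)
    (max_le stepA (le_trans (Padic.nonarchimedean _ _) (max_le stepC stepE)))
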